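/- Let $p \geq 2$, $n \geq 1$, and let $c_0,\dots,c_{n-1}$ be real numbers. Consider the linear function $f(u) = \sum_{m=0}^{n-1} c_m u_m$ on the cone $\tilde{\mathcal{U}} = \{u \in \mathbb{R}^n : u_0 \geq 1,\ u_i \geq p\,u_{i-1}\ (1 \leq i \leq n-1)\}$. Then $f$ tends to $-\infty$ on $\tilde{\mathcal{U}}$ as $u_{n-1} \to \infty$ (i.e., for every $M$ there is $T$ such that $f(u) < M$ whenever $u \in \tilde{\mathcal{U}}$ and $u_{n-1} \geq T$) if and only if for every $0 \leq m \leq n-1$ the inequality $\sum_{l=m}^{n-1} c_l\, p^{l-(n-1)} < 0$ holds. -/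

import Mathlib

open Finset

lemma repr_u (p : ℕ) (u : ℕ → ℝ) (l : ℕ) :
    u l = ∑ i ∈ range (l+1), (p:ℝ)^(l-i) *
      (if i = 0 then u 0 else u i - p * u (i-1)) := by
  induction l with
  | zero => simp
  | succ l ih =>
    rw [Finset.sum_range_succ]
    have h1 : ∑ i ∈ range (l+1), (p:ℝ)^(l+1-i) * (if i = 0 then u 0 else u i - p * u (i-1))
        = p * ∑ i ∈ range (l+1), (p:ℝ)^(l-i) * (if i = 0 then u 0 else u i - p * u (i-1)) := by
      rw [Finset.mul_sum]
      apply Finset.sum_congr rfl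
      intro i hi
      have hi' : i ≤ l := by simpa [Nat.lt_succ_iff] using hi
      have : l + 1 - i = (l - i) + 1 := by omega
      rw [this, pow_succ]
      ring
    rw [h1, ← ih]
    simp [Nat.succ_sub_one]

lemma DS_rel (p n : ℕ) (hp : 2 ≤ p) (c : ℕ → ℝ) (i : ℕ) (hi : i ≤ n - 1) :
    ∑ l ∈ Icc i (n-1), c l * (p:ℝ)^(l-i)
      = (p:ℝ)^(n-1-i) * ∑ l ∈ Icc i (n-1), c l * ((p:ℝ)^l / (p:ℝ)^(n-1)) := by
  rw [Finset.mul_sum]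
  apply Finset.sum_congr rfl
  intro l hl
  simp only [Finset.mem_Icc] at hl
  have hp0 : (p:ℝ) ≠ 0 := by positivity
  field_simp
  rw [show c l * (p:ℝ)^(l-i) * (p:ℝ)^(n-1) = c l * ((p:ℝ)^(l-i) * (p:ℝ)^(n-1)) from by ring,
    show c l * (p:ℝ)^(n-1-i) * (p:ℝ)^l = c l * ((p:ℝ)^(n-1-i) * (p:ℝ)^l) from by ring]
  congr 1
  rw [← pow_add, ← pow_add]
  congr 1
  omega

theorem stmt16 (p n : ℕ) (hp : 2 ≤ p) (hn : 1 ≤ n) (c : ℕ → ℝ) :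
    (∀ M : ℝ, ∃ T : ℝ, ∀ u : ℕ → ℝ,
        1 ≤ u 0 → (∀ i, 1 ≤ i → i ≤ n - 1 → (p : ℝ) * u (i - 1) ≤ u i) →
        T ≤ u (n - 1) → ∑ m ∈ Finset.range n, c m * u m < M) ↔
    ∀ m ≤ n - 1,
      ∑ l ∈ Finset.Icc m (n - 1), c l * ((p : ℝ) ^ l / (p : ℝ) ^ (n - 1)) < 0 := by
  have hp1 : (1:ℝ) ≤ (p:ℝ) := by exact_mod_cast Nat.one_le_of_lt hp
  have hp0 : (0:ℝ) < (p:ℝ) := by positivity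
  set S : ℕ → ℝ := fun m => ∑ l ∈ Finset.Icc m (n - 1), c l * ((p:ℝ)^l / (p:ℝ)^(n-1)) with hSdef
  constructor
  · -- forward, by contradiction
    intro h m hm
    by_contra hSm
    push_neg at hSm
    obtain ⟨T, hT⟩ := h (∑ l ∈ range m, c l * (p:ℝ)^l)
    set t : ℝ := max ((p:ℝ)^m) (max T 1) with htdef
    have ht1 : (1:ℝ) ≤ t := le_trans (le_max_right T 1) (le_max_right _ _)
    have htp : (p:ℝ)^m ≤ t := le_max_left _ _
    have htT : T ≤ t := le_trans (le_max_left T 1) (le_max_right _ _)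
    set u : ℕ → ℝ := fun l => if l < m then (p:ℝ)^l else t * (p:ℝ)^(l-m) with hudef
    have hu0 : 1 ≤ u 0 := by
      by_cases h0 : 0 < m
      · simp [hudef, h0]
      · have : m = 0 := by omega
        simp [hudef, this, ht1]
    have hucon : ∀ i, 1 ≤ i → i ≤ n - 1 → (p:ℝ) * u (i-1) ≤ u i := by
      intro i hi1 hi2
      rcases lt_trichotomy i m with hlt | heq | hgt
      · have : i - 1 < m := by omega
        simp only [hudef, if_pos hlt, if_pos this]
        rw [← pow_succ']
        have : i - 1 + 1 = i := by omega
        rw [this]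
      · subst heq
        have h1 : i - 1 < i := by omega
        simp only [hudef, if_pos h1, lt_irrefl, if_neg (lt_irrefl i)]
        have : i - i = 0 := by omega
        rw [this, pow_zero, mul_one, ← pow_succ']
        have : i - 1 + 1 = i := by omega
        rw [this]; exact htp
      · have h1 : ¬ (i < m) := by omega
        have h2 : ¬ (i - 1 < m) := by omega
        simp only [hudef, if_neg h1, if_neg h2]
        rw [← mul_assoc, mul_comm (p:ℝ) t, mul_assoc, ← pow_succ']
        have : i - 1 - m + 1 = i - m := by omega
        rw [this]
    have huT : T ≤ u (n-1) := by
      have h1 : ¬ (n - 1 < m) := by omega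
      simp only [hudef, if_neg h1]
      calc T ≤ t := htT
        _ = t * 1 := (mul_one t).symm
        _ ≤ t * (p:ℝ)^(n-1-m) := by
            apply mul_le_mul_of_nonneg_left _ (by linarith)
            exact one_le_pow₀ hp1
    have hlt := hT u hu0 hucon huT
    -- compute the sum
    have hsplit : ∑ l ∈ range n, c l * u l
        = ∑ l ∈ range m, c l * u l + ∑ l ∈ Icc m (n-1), c l * u l := by
      have hIco : Finset.Ico m n = Finset.Icc m (n-1) := by
        rw [← Finset.Ico_add_one_right_eq_Icc]
        congr 1
        omega
      rw [Finset.range_eq_Ico, ← Finset.sum_Ico_consecutive _ (Nat.zero_le m) (by omega : m ≤ n),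
        ← Finset.range_eq_Ico, hIco]
    have h2 : ∑ l ∈ range m, c l * u l = ∑ l ∈ range m, c l * (p:ℝ)^l := by
      apply Finset.sum_congr rfl
      intro l hl
      simp only [Finset.mem_range] at hl
      simp [hudef, hl]
    have h3 : ∑ l ∈ Icc m (n-1), c l * u l = t * ∑ l ∈ Icc m (n-1), c l * (p:ℝ)^(l-m) := by
      rw [Finset.mul_sum]
      apply Finset.sum_congr rfl
      intro l hl
      simp only [Finset.mem_Icc] at hl
      have : ¬ (l < m) := by omega
      simp [hudef, this]
      ring
    have h4 : 0 ≤ t * ∑ l ∈ Icc m (n-1), c l * (p:ℝ)^(l-m) := by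
      rw [DS_rel p n hp c m hm]
      exact mul_nonneg (by linarith) (mul_nonneg (by positivity) hSm)
    rw [hsplit, h2, h3] at hlt
    linarith
  · -- reverse
    intro hS M
    have hne : (range n).Nonempty := ⟨0, Finset.mem_range.mpr hn⟩
    set ε : ℝ := (range n).inf' hne (fun i => -S i) with hedef
    have hεpos : 0 < ε := by
      rw [hedef, Finset.lt_inf'_iff]
      intro i hi
      simp only [Finset.mem_range] at hi
      have := hS i (by omega)
      linarith
    have hεle : ∀ i < n, S i ≤ -ε := by
      intro i hi
      have := Finset.inf'_le (fun i => -S i) (Finset.mem_range.mpr hi)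
      rw [← hedef] at this
      linarith
    refine ⟨max 1 ((1 - M)/ε), ?_⟩
    intro u hu0 hucon huT
    set v : ℕ → ℝ := fun i => if i = 0 then u 0 else u i - p * u (i-1) with hvdef
    have hv : ∀ i < n, 0 ≤ v i := by
      intro i hi
      by_cases h0 : i = 0
      · simp [hvdef, h0]; linarith
      · have h1 : 1 ≤ i := by omega
        have h2 : i ≤ n - 1 := by omega
        have := hucon i h1 h2
        simp [hvdef, h0]
        linarith
    have key : ∑ m ∈ range n, c m * u m
        = ∑ i ∈ range n, v i * ∑ l ∈ Icc i (n-1), c l * (p:ℝ)^(l-i) := by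
      have step1 : ∀ m ∈ range n, c m * u m
          = ∑ i ∈ range (m+1), c m * (p:ℝ)^(m-i) * v i := by
        intro m _
        rw [repr_u p u m, Finset.mul_sum]
        apply Finset.sum_congr rfl
        intro i _
        simp only [hvdef]
        ring
      rw [Finset.sum_congr rfl step1]
      rw [Finset.sum_comm' (t' := range n) (s' := fun i => Icc i (n-1))
        (f := fun m i => c m * (p:ℝ)^(m-i) * v i)]
      · apply Finset.sum_congr rfl
        intro i _
        rw [Finset.mul_sum]
        apply Finset.sum_congr rfl
        intro l _
        ring
      · intro x y
        simp only [Finset.mem_range, Finset.mem_Icc, Nat.lt_succ_iff]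
        omega
    have hbound : ∑ m ∈ range n, c m * u m ≤ -ε * u (n-1) := by
      rw [key]
      have hrepr : u (n-1) = ∑ i ∈ range n, (p:ℝ)^(n-1-i) * v i := by
        have h0 := repr_u p u (n-1)
        rw [show n - 1 + 1 = n from by omega] at h0
        simp only [hvdef]
        exact h0
      rw [hrepr, Finset.mul_sum]
      apply Finset.sum_le_sum
      intro i hi
      simp only [Finset.mem_range] at hi
      rw [DS_rel p n hp c i (by omega)]
      have h1 : S i ≤ -ε := hεle i hi
      have h2 : 0 ≤ v i := hv i hi
      have h3 : (0:ℝ) ≤ (p:ℝ)^(n-1-i) := by positivity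
      calc v i * ((p:ℝ)^(n-1-i) * S i) ≤ v i * ((p:ℝ)^(n-1-i) * (-ε)) := by
            apply mul_le_mul_of_nonneg_left _ h2
            exact mul_le_mul_of_nonneg_left h1 h3
        _ = -ε * ((p:ℝ)^(n-1-i) * v i) := by ring
    have huT1 : (1 - M)/ε ≤ u (n-1) := le_trans (le_max_right _ _) huT
    have hM : 1 - M ≤ u (n-1) * ε := (div_le_iff₀ hεpos).mp huT1
    nlinarith [hM, hbound]
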